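/- arXiv:2112.08937 — 3 statements merged into one kernel-verified Lean document; each statement's English description precedes it below -/
import Mathlib

section
/- Let f : D → ℂ with f(0) = 0, f(z) ≠ 0 for z ≠ 0 near 0, be asymptotically homogeneous at 0, i.e., for every ζ ∈ ℂ, lim_{z→0, z∈ℂ*} f(zζ)/f(z) = ζ, with the limit locally uniform in ζ. Then f is conformal by Belinskij at 0: f(w) = A(ρ)(w + o(ρ)) where ρ = |w|, A(ρ) = f(ρ)/ρ, o(ρ)/ρ → 0 as ρ → 0, and A satisfies lim_{ρ→0} A(tρ)/A(ρ) = 1 for every t > 0. -/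
open Filter

/-- `A(ρ) = f(ρ)/ρ` for real `ρ`. -/
noncomputable def belA (f : ℂ → ℂ) (ρ : ℝ) : ℂ := f (ρ : ℂ) / (ρ : ℂ)

private lemma bel_key (u x w a : ℂ) (ha : a ≠ 0) :
    (u / (x / a) - w) / a = u / x - w / a := by
  rcases eq_or_ne x 0 with hx | hx
  · simp [hx, sub_div, neg_div]
  · field_simp

/-- Asymptotic homogeneity at the origin, locally uniform in the parameter,
implies conformality by Belinskij at the origin:
`f(w) = A(|w|)(w + o(|w|))` with `A(ρ) = f(ρ)/ρ` and `A(tρ)/A(ρ) → 1`. -/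
theorem belinskij_conformality_of_asymptotic_homogeneity
    (D : Set ℂ) (hD : IsOpen D) (h0 : (0 : ℂ) ∈ D)
    (f : ℂ → ℂ) (hf0 : f 0 = 0)
    (hne : ∀ᶠ z in nhdsWithin (0 : ℂ) {0}ᶜ, f z ≠ 0)
    (hhom : ∀ ε > (0 : ℝ), ∀ R > (0 : ℝ), ∃ r > (0 : ℝ),
      ∀ z : ℂ, z ≠ 0 → ‖z‖ < r → ∀ ζ : ℂ, ‖ζ‖ ≤ R →
        ‖f (z * ζ) / f z - ζ‖ < ε) :
    Tendsto (fun w : ℂ =>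
        (f w / belA f ‖w‖ - w) / ((‖w‖ : ℝ) : ℂ))
      (nhdsWithin (0 : ℂ) {0}ᶜ) (nhds 0)
    ∧ ∀ t > (0 : ℝ),
        Tendsto (fun ρ : ℝ => belA f (t * ρ) / belA f ρ)
          (nhdsWithin 0 (Set.Ioi 0)) (nhds 1) := by
  constructor
  · rw [Metric.tendsto_nhdsWithin_nhds]
    intro ε hε
    obtain ⟨r, hr, H⟩ := hhom ε hε 1 one_pos
    refine ⟨r, hr, ?_⟩
    intro w hw hdist
    have hw0 : w ≠ 0 := hw
    have habs : (0 : ℝ) < ‖w‖ := by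
      simpa using norm_pos_iff.mpr hw0
    have ha : ((‖w‖ : ℝ) : ℂ) ≠ 0 := by
      exact_mod_cast ne_of_gt habs
    have hzr : ‖((‖w‖ : ℝ) : ℂ)‖ < r := by
      rw [Complex.norm_real, Real.norm_eq_abs, abs_of_pos habs]
      simpa [Complex.dist_eq] using hdist
    have hζ : ‖w / ((‖w‖ : ℝ) : ℂ)‖ ≤ 1 := by
      rw [norm_div, Complex.norm_real, Real.norm_eq_abs, abs_of_pos habs, div_self (ne_of_gt habs)]
    have key := H ((‖w‖ : ℝ) : ℂ) ha hzr (w / ((‖w‖ : ℝ) : ℂ)) hζ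
    have hmul : ((‖w‖ : ℝ) : ℂ) * (w / ((‖w‖ : ℝ) : ℂ)) = w := by
      field_simp
    rw [hmul] at key
    have hrw : (f w / belA f (‖w‖) - w) / ((‖w‖ : ℝ) : ℂ)
        = f w / f ((‖w‖ : ℝ) : ℂ) - w / ((‖w‖ : ℝ) : ℂ) := by
      unfold belA
      exact bel_key _ _ _ _ ha
    rw [Complex.dist_eq, sub_zero, hrw]
    exact key
  · intro t ht
    rw [Metric.tendsto_nhdsWithin_nhds]
    intro ε hε
    have hε' : 0 < ε * t / 2 := by positivity
    obtain ⟨r, hr, H⟩ := hhom (min (ε * t / 2) (t / 2)) (lt_min hε' (by positivity)) t ht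
    refine ⟨r, hr, ?_⟩
    intro ρ hρ hdist
    have hρ0 : (0 : ℝ) < ρ := hρ
    have hz : ((ρ : ℝ) : ℂ) ≠ 0 := by exact_mod_cast ne_of_gt hρ0
    have hzr : ‖((ρ : ℝ) : ℂ)‖ < r := by
      rw [Complex.norm_real, Real.norm_eq_abs, abs_of_pos hρ0]
      simpa [Real.dist_eq, abs_of_pos hρ0] using hdist
    have key := H ((ρ : ℝ) : ℂ) hz hzr ((t : ℝ) : ℂ) (by
      rw [Complex.norm_real, Real.norm_eq_abs, abs_of_pos ht])
    -- key : |f(ρ t)/f(ρ) - t| < min (ε t / 2) (t/2)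
    -- so f(ρ) ≠ 0 in fact unless f(ρ t)/f(ρ)=0 far from t... need f ρ ≠ 0?
    -- If f ρ = 0 then f(ρ t)/f(ρ) = 0 and |0 - t| = t ≥ t/2, contradiction.
    have hfρ : f ((ρ : ℝ) : ℂ) ≠ 0 := by
      intro h
      rw [h, div_zero, zero_sub, norm_neg, Complex.norm_real, Real.norm_eq_abs, abs_of_pos ht] at key
      have := lt_of_lt_of_le key (min_le_right _ _)
      linarith
    have ht0 : ((t : ℝ) : ℂ) ≠ 0 := by exact_mod_cast ne_of_gt ht
    have hident : belA f (t * ρ) / belA f ρ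
        = (f (((ρ : ℝ) : ℂ) * ((t : ℝ) : ℂ)) / f ((ρ : ℝ) : ℂ)) / ((t : ℝ) : ℂ) := by
      unfold belA
      push_cast
      rw [mul_comm ((t:ℝ):ℂ) ((ρ:ℝ):ℂ)]
      field_simp
    rw [Real.dist_eq] at *
    rw [hident]
    have : ‖(f (((ρ : ℝ) : ℂ) * ((t : ℝ) : ℂ)) / f ((ρ : ℝ) : ℂ)) / ((t : ℝ) : ℂ) - 1‖
        = ‖f (((ρ : ℝ) : ℂ) * ((t : ℝ) : ℂ)) / f ((ρ : ℝ) : ℂ) - ((t : ℝ) : ℂ)‖ / t := by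
      rw [div_sub' ht0, norm_div, Complex.norm_real, Real.norm_eq_abs, abs_of_pos ht]
      ring_nf
    rw [Complex.dist_eq, this]
    rw [div_lt_iff₀ ht]
    calc ‖f (((ρ : ℝ) : ℂ) * ((t : ℝ) : ℂ)) / f ((ρ : ℝ) : ℂ) - ((t : ℝ) : ℂ)‖
        < min (ε * t / 2) (t / 2) := key
      _ ≤ ε * t / 2 := min_le_left _ _
      _ < ε * t := by nlinarith
end

section
/- Let f : D → ℂ be a homeomorphism onto its image with f(0) = 0 ∈ D satisfying: for all δ > 0, f(z')/f(z) - z'/z → 0 as z → 0 along z ∈ ℂ*, |z'| ≤ δ|z|. Then lim_{r→0} (max_{|z|=r} |f(z)|)/(min_{|z|=r} |f(z)|) = 1 (conformality by Lavrent'iev at the origin). -/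
open Filter

theorem lavrentiev_conformality
    (D : Set ℂ) (hD : IsOpen D) (h0 : (0 : ℂ) ∈ D)
    (f : ℂ → ℂ) (hf0 : f 0 = 0)
    (hcont : ContinuousOn f D) (hinj : Set.InjOn f D)
    (h3 : ∀ δ > (0 : ℝ), ∀ ε > (0 : ℝ), ∃ r > (0 : ℝ),
      ∀ z z' : ℂ, z ≠ 0 → ‖z‖ < r → ‖z'‖ ≤ δ * ‖z‖ →
        ‖f z' / f z - z' / z‖ < ε) :
    Tendsto (fun r : ℝ =>
        sSup ((fun z => ‖f z‖) '' Metric.sphere (0 : ℂ) r) /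
          sInf ((fun z => ‖f z‖) '' Metric.sphere (0 : ℂ) r))
      (nhdsWithin 0 (Set.Ioi 0)) (nhds 1) := by
  obtain ⟨r1, hr1pos, hr1⟩ := Metric.isOpen_iff.mp hD 0 h0
  rw [Metric.tendsto_nhdsWithin_nhds]
  intro ε hε
  obtain ⟨r0, hr0pos, hr0⟩ := h3 1 one_pos (ε / 2) (by linarith)
  refine ⟨min r0 r1, lt_min hr0pos hr1pos, ?_⟩
  intro r hr hrd
  simp only [Set.mem_Ioi] at hr
  rw [Real.dist_eq, sub_zero, abs_of_pos hr] at hrd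
  have hrr0 : r < r0 := lt_of_lt_of_le hrd (min_le_left _ _)
  have hrr1 : r < r1 := lt_of_lt_of_le hrd (min_le_right _ _)
  have hsub : Metric.sphere (0 : ℂ) r ⊆ D := by
    intro z hz
    apply hr1
    simp only [Metric.mem_sphere, Metric.mem_ball] at hz ⊢
    rw [hz]; exact hrr1
  have habs : ∀ z ∈ Metric.sphere (0 : ℂ) r, ‖z‖ = r := by
    intro z hz
    simpa [Complex.dist_eq] using hz
  have hne0 : ∀ z ∈ Metric.sphere (0 : ℂ) r, z ≠ 0 := by
    intro z hz h
    rw [h] at hz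
    have := habs 0 hz
    simp at this
    exact absurd this.symm (ne_of_gt hr)
  have hfne0 : ∀ z ∈ Metric.sphere (0 : ℂ) r, f z ≠ 0 := by
    intro z hz h
    exact hne0 z hz (hinj (hsub hz) h0 (by rw [h, hf0]))
  set S := (fun z => ‖f z‖) '' Metric.sphere (0 : ℂ) r with hS
  have hK : IsCompact S :=
    (isCompact_sphere (0 : ℂ) r).image_of_continuousOn
      (continuous_norm.comp_continuousOn (hcont.mono hsub))
  have hneS : S.Nonempty :=
    (NormedSpace.sphere_nonempty.mpr hr.le).image _
  obtain ⟨zM, hzM, hMeq⟩ := hK.sSup_mem hneS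
  obtain ⟨zm, hzm, hmeq⟩ := hK.sInf_mem hneS
  have hmpos : 0 < sInf S := by
    rw [← hmeq]
    exact norm_pos_iff.mpr (hfne0 zm hzm)
  have hle : sInf S ≤ sSup S := csInf_le_csSup hneS hK.bddBelow hK.bddAbove
  have key := hr0 zm zM (hne0 zm hzm) (by rw [habs zm hzm]; exact hrr0)
    (by rw [habs zM hzM, habs zm hzm, one_mul])
  have hquot : ‖zM / zm‖ = 1 := by
    rw [norm_div, habs zM hzM, habs zm hzm, div_self (ne_of_gt hr)]
  have htri : ‖f zM / f zm‖ ≤ ‖zM / zm‖ +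
      ‖f zM / f zm - zM / zm‖ := by
    calc ‖f zM / f zm‖
        = ‖zM / zm + (f zM / f zm - zM / zm)‖ := by ring_nf
      _ ≤ _ := norm_add_le _ _
  have hbound : sSup S / sInf S ≤ 1 + ε / 2 := by
    rw [← hMeq, ← hmeq, ← norm_div]
    calc ‖f zM / f zm‖ ≤ ‖zM / zm‖ +
        ‖f zM / f zm - zM / zm‖ := htri
      _ ≤ 1 + ε / 2 := by rw [hquot]; linarith
  have hge1 : 1 ≤ sSup S / sInf S := (one_le_div hmpos).mpr hle
  rw [Real.dist_eq, abs_of_nonneg (by linarith)]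
  linarith
end

section
/- Let f : D → ℂ, f(0)=0, be injective continuous near 0 and satisfy: for all δ > 0, lim_{z→0}( |f(z')|/|f(z)| - |z'|/|z| ) = 0 along z ∈ ℂ*, |z'| ≤ δ|z|. Then lim_{z→0, z∈ℂ*} ln|f(z)| / ln|z| = 1. -/
set_option maxHeartbeats 1000000


open Filter

private lemma iter_pos (f : ℂ → ℂ) (r a : ℝ) (ha' : a < 1/4)
    (H : ∀ z : ℂ, z ≠ 0 → ‖z‖ < r →
      |‖f (z/2)‖ / ‖f z‖ - 1/2| < a) :
    ∀ z : ℂ, z ≠ 0 → ‖z‖ < r → 0 < ‖f z‖ := by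
  intro z hz hzr
  rcases (norm_nonneg (f z)).lt_or_eq with h | h
  · exact h
  · exfalso
    have h2 := H z hz hzr
    rw [← h, div_zero, zero_sub, abs_neg] at h2
    rw [abs_of_nonneg (by norm_num)] at h2
    linarith

private lemma iter_bound (f : ℂ → ℂ) (r a : ℝ) (ha' : a < 1/4)
    (H : ∀ z : ℂ, z ≠ 0 → ‖z‖ < r →
      |‖f (z/2)‖ / ‖f z‖ - 1/2| < a) :
    ∀ (z : ℂ), z ≠ 0 → ‖z‖ < r → ∀ n : ℕ,
      (1/2 - a)^n * ‖f z‖ ≤ ‖f (z / 2^n)‖ ∧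
      ‖f (z / 2^n)‖ ≤ (1/2 + a)^n * ‖f z‖ := by
  intro z hz hzr n
  induction n with
  | zero => simp
  | succ n ih =>
    have hu0 : z / 2^n ≠ 0 := div_ne_zero hz (pow_ne_zero _ two_ne_zero)
    have hur : ‖z / 2^n‖ < r := by
      rw [norm_div]
      have h1 : (1:ℝ) ≤ ‖(2:ℂ)^n‖ := by
        rw [norm_pow, Complex.norm_two]
        exact one_le_pow₀ one_le_two
      calc ‖z‖ / ‖(2:ℂ)^n‖ ≤ ‖z‖ / 1 := by
            apply div_le_div_of_nonneg_left (norm_nonneg z) one_pos h1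
        _ = ‖z‖ := div_one _
        _ < r := hzr
    have hfu : 0 < ‖f (z / 2^n)‖ := iter_pos f r a ha' H _ hu0 hur
    have h2 := H _ hu0 hur
    rw [abs_lt] at h2
    have hlow : (1/2 - a) * ‖f (z / 2^n)‖ ≤ ‖f (z / 2^n / 2)‖ :=
      le_of_lt ((lt_div_iff₀ hfu).mp (by linarith [h2.1]))
    have hhigh : ‖f (z / 2^n / 2)‖ ≤ (1/2 + a) * ‖f (z / 2^n)‖ :=
      le_of_lt ((div_lt_iff₀ hfu).mp (by linarith [h2.2]))
    have hdiv : z / 2^n / 2 = z / 2^(n+1) := by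
      rw [div_div, ← pow_succ]
    rw [hdiv] at hlow hhigh
    have h12a : (0:ℝ) ≤ 1/2 - a := by
      rcases le_or_gt 0 a with h | h
      · linarith
      · linarith
    constructor
    · calc (1/2 - a)^(n+1) * ‖f z‖
          = (1/2 - a) * ((1/2 - a)^n * ‖f z‖) := by ring
        _ ≤ (1/2 - a) * ‖f (z / 2^n)‖ :=
            mul_le_mul_of_nonneg_left ih.1 h12a
        _ ≤ ‖f (z / 2^(n+1))‖ := hlow
    · calc ‖f (z / 2^(n+1))‖
          ≤ (1/2 + a) * ‖f (z / 2^n)‖ := hhigh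
        _ ≤ (1/2 + a) * ((1/2 + a)^n * ‖f z‖) :=
            mul_le_mul_of_nonneg_left ih.2 (by linarith)
        _ = (1/2 + a)^(n+1) * ‖f z‖ := by ring

private lemma exists_n (r x : ℝ) (hr : 0 < r) (hx : 0 < x) (hxr : x < r/2) :
    ∃ n : ℕ, r/2 ≤ x * 2^n ∧ x * 2^n < r := by
  classical
  have hS : ∃ n : ℕ, r/2 ≤ x * 2^n := by
    obtain ⟨n, hn⟩ := pow_unbounded_of_one_lt (r/2/x) (one_lt_two (α := ℝ))
    refine ⟨n, ?_⟩
    rw [div_lt_iff₀ hx] at hn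
    linarith
  let n := Nat.find hS
  have h1 : r/2 ≤ x * 2^n := Nat.find_spec hS
  have hn0 : n ≠ 0 := by
    intro h
    have h1' := h1
    rw [h, pow_zero, mul_one] at h1'
    linarith
  have h2 : ¬ (r/2 ≤ x * 2^(n-1)) := Nat.find_min hS (Nat.pred_lt hn0)
  refine ⟨n, h1, ?_⟩
  push_neg at h2
  have heq : x * 2^n = (x * 2^(n-1)) * 2 := by
    rw [mul_assoc, ← pow_succ, Nat.sub_add_cancel (Nat.one_le_iff_ne_zero.mpr hn0)]
  linarith

theorem log_ratio_tendsto_one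
    (D : Set ℂ) (hD : IsOpen D) (h0 : (0 : ℂ) ∈ D)
    (f : ℂ → ℂ) (hf0 : f 0 = 0)
    (hcont : ContinuousOn f D) (hinj : Set.InjOn f D)
    (hne : ∀ᶠ z in nhdsWithin (0 : ℂ) {0}ᶜ, f z ≠ 0)
    (hlim : Tendsto f (nhdsWithin (0 : ℂ) {0}ᶜ) (nhds 0))
    (h6m : ∀ δ > (0 : ℝ), ∀ ε > (0 : ℝ), ∃ r > (0 : ℝ),
      ∀ z z' : ℂ, z ≠ 0 → ‖z‖ < r → ‖z'‖ ≤ δ * ‖z‖ →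
        |‖f z'‖ / ‖f z‖
          - ‖z'‖ / ‖z‖| < ε) :
    Tendsto (fun z : ℂ =>
        Real.log (‖f z‖) / Real.log (‖z‖))
      (nhdsWithin (0 : ℂ) {0}ᶜ) (nhds 1) := by
  rw [Metric.tendsto_nhdsWithin_nhds]
  intro ε hε
  have hlog2 : (0:ℝ) < Real.log 2 := Real.log_pos one_lt_two
  have hlog2le : Real.log 2 ≤ 1 := by
    have := Real.log_le_sub_one_of_pos (x := 2) (by norm_num)
    linarith
  obtain ⟨a, ha, ha8, haε⟩ : ∃ a : ℝ, 0 < a ∧ a ≤ 1/8 ∧ a ≤ ε * Real.log 2 / 8 :=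
    ⟨min (1/8 : ℝ) (ε * Real.log 2 / 8), lt_min (by norm_num) (by positivity),
      min_le_left _ _, min_le_right _ _⟩
  have ha' : a < 1/4 := by linarith
  obtain ⟨r₀, hr₀, hH⟩ := h6m 1 one_pos a ha
  have H : ∀ z : ℂ, z ≠ 0 → ‖z‖ < r₀ →
      |‖f (z/2)‖ / ‖f z‖ - 1/2| < a := by
    intro z hz hzr
    have habs : ‖z/2‖ = ‖z‖ / 2 := by
      rw [norm_div, Complex.norm_two]
    have h1 : ‖z/2‖ ≤ 1 * ‖z‖ := by
      rw [habs, one_mul]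
      linarith [norm_nonneg z]
    have h2 := hH z (z/2) hz hzr h1
    have hz0 : ‖z‖ ≠ 0 := norm_ne_zero_iff.mpr hz
    have h3 : ‖z/2‖ / ‖z‖ = 1/2 := by
      rw [habs]
      field_simp
    rwa [h3] at h2
  obtain ⟨r₁, hr₁, hball⟩ := Metric.isOpen_iff.mp hD 0 h0
  obtain ⟨r, hr, hrr₀, hrr₁, hr1⟩ :
      ∃ r : ℝ, 0 < r ∧ r < r₀ ∧ r < r₁ ∧ r ≤ 1/2 := by
    refine ⟨min (min r₀ r₁) 1 / 2, ?_, ?_, ?_, ?_⟩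
    · have : 0 < min (min r₀ r₁) 1 := lt_min (lt_min hr₀ hr₁) one_pos
      positivity
    · have h1 : min (min r₀ r₁) 1 ≤ r₀ := le_trans (min_le_left _ _) (min_le_left _ _)
      linarith
    · have h1 : min (min r₀ r₁) 1 ≤ r₁ := le_trans (min_le_left _ _) (min_le_right _ _)
      linarith
    · have h1 : min (min r₀ r₁) 1 ≤ 1 := min_le_right _ _
      linarith
  have hlogr_neg : Real.log r < 0 := Real.log_neg hr (by linarith)
  -- the compact annulus
  set A : Set ℂ := Metric.closedBall (0:ℂ) r \ Metric.ball (0:ℂ) (r/2) with hA_def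
  have hmemA : ∀ z : ℂ, z ∈ A ↔ r/2 ≤ ‖z‖ ∧ ‖z‖ ≤ r := by
    intro z
    simp [hA_def, Metric.mem_closedBall, Metric.mem_ball, Complex.dist_eq, and_comm]
  have hAcomp : IsCompact A := (isCompact_closedBall (0:ℂ) r).diff Metric.isOpen_ball
  have hAD : A ⊆ D := by
    intro z hz
    apply hball
    rw [Metric.mem_ball, Complex.dist_eq, sub_zero]
    exact lt_of_le_of_lt ((hmemA z).mp hz).2 hrr₁
  have hAne : A.Nonempty := by
    refine ⟨((r/2 : ℝ) : ℂ), (hmemA _).mpr ⟨?_, ?_⟩⟩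
    · rw [Complex.norm_real, Real.norm_eq_abs, abs_of_pos (by positivity)]
    · rw [Complex.norm_real, Real.norm_eq_abs, abs_of_pos (by positivity)]; linarith
  have hAne0 : ∀ z ∈ A, z ≠ 0 := by
    intro z hz h0'
    have := ((hmemA z).mp hz).1
    rw [h0', norm_zero] at this
    linarith
  have hApos : ∀ z ∈ A, 0 < ‖f z‖ := by
    intro z hz
    exact iter_pos f r₀ a ha' H z (hAne0 z hz)
      (lt_of_le_of_lt ((hmemA z).mp hz).2 hrr₀)
  have hcontA : ContinuousOn (fun z => Real.log (‖f z‖)) A := by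
    apply ContinuousOn.log
    · exact continuous_norm.comp_continuousOn (hcont.mono hAD)
    · intro z hz
      exact ne_of_gt (hApos z hz)
  obtain ⟨zm, hzm, hmmin⟩ := hAcomp.exists_isMinOn hAne hcontA
  obtain ⟨zM, hzM, hMmax⟩ := hAcomp.exists_isMaxOn hAne hcontA
  set m := Real.log (‖f zm‖) with hm_def
  set M := Real.log (‖f zM‖) with hM_def
  have hm : ∀ z ∈ A, m ≤ Real.log (‖f z‖) := fun z hz => hmmin hz
  have hM : ∀ z ∈ A, Real.log (‖f z‖) ≤ M := fun z hz => hMmax hz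
  obtain ⟨C, hC_def⟩ : ∃ C : ℝ, C = |M| + |m| + |Real.log r| + 1 := ⟨_, rfl⟩
  have hC : 0 < C := by rw [hC_def]; positivity
  obtain ⟨N, hN⟩ := exists_nat_gt (2 * C / (ε * Real.log 2))
  refine ⟨r / 2^(N+1), by positivity, ?_⟩
  intro w hw hwd
  have hw0 : w ≠ 0 := hw
  have hwabs : ‖w‖ < r / 2^(N+1) := by
    rwa [Complex.dist_eq, sub_zero] at hwd
  have hwpos : 0 < ‖w‖ := norm_pos_iff.mpr hw0
  have h2N : (2:ℝ) ≤ 2^(N+1) := by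
    calc (2:ℝ) = 2^1 := (pow_one 2).symm
      _ ≤ 2^(N+1) := pow_le_pow_right₀ one_le_two (by omega)
  have hwr2 : ‖w‖ < r/2 := by
    apply lt_of_lt_of_le hwabs
    apply div_le_div_of_nonneg_left hr.le (by norm_num) h2N
  obtain ⟨n, hn1, hn2⟩ := exists_n r (‖w‖) hr hwpos hwr2
  -- N < n
  have hNn : N < n := by
    by_contra hc
    push_neg at hc
    have h2n : (2:ℝ)^n ≤ 2^N := pow_le_pow_right₀ one_le_two hc
    have hkey : ‖w‖ * 2^n < (r / 2^(N+1)) * 2^N := by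
      calc ‖w‖ * 2^n ≤ ‖w‖ * 2^N :=
            mul_le_mul_of_nonneg_left h2n hwpos.le
        _ < (r / 2^(N+1)) * 2^N := by
            apply mul_lt_mul_of_pos_right hwabs (by positivity)
    have heq : (r / 2^(N+1)) * 2^N = r/2 := by
      rw [pow_succ]
      field_simp
    rw [heq] at hkey
    linarith
  set z : ℂ := (2:ℂ)^n * w with hz_def
  have hz0 : z ≠ 0 := mul_ne_zero (pow_ne_zero _ two_ne_zero) hw0
  have hzabs : ‖z‖ = 2^n * ‖w‖ := by
    rw [hz_def, norm_mul, norm_pow, Complex.norm_two]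
  have hzlo : r/2 ≤ ‖z‖ := by rw [hzabs]; linarith [hn1, mul_comm ((2:ℝ)^n) (‖w‖)]
  have hzhi : ‖z‖ < r := by
    rw [hzabs, mul_comm]; exact hn2
  have hzA : z ∈ A := (hmemA z).mpr ⟨hzlo, hzhi.le⟩
  have hzr₀ : ‖z‖ < r₀ := lt_trans hzhi hrr₀
  have hzw : z / 2^n = w := by
    rw [hz_def]
    exact mul_div_cancel_left₀ w (pow_ne_zero _ two_ne_zero)
  obtain ⟨hlb, hub⟩ := iter_bound f r₀ a ha' H z hz0 hzr₀ n
  rw [hzw] at hlb hub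
  have hfz : 0 < ‖f z‖ := hApos z hzA
  have ha12 : (0:ℝ) < 1/2 - a := by linarith
  have hfw : 0 < ‖f w‖ :=
    lt_of_lt_of_le (mul_pos (pow_pos ha12 n) hfz) hlb
  -- logs of the bounds
  have hLflb : (n:ℝ) * Real.log (1/2 - a) + Real.log (‖f z‖)
      ≤ Real.log (‖f w‖) := by
    have h := Real.log_le_log (mul_pos (pow_pos ha12 n) hfz) hlb
    rwa [Real.log_mul (pow_pos ha12 n).ne' (ne_of_gt hfz), Real.log_pow] at h
  have hLfub : Real.log (‖f w‖)
      ≤ (n:ℝ) * Real.log (1/2 + a) + Real.log (‖f z‖) := by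
    have h := Real.log_le_log hfw hub
    rwa [Real.log_mul (by positivity : ((1:ℝ)/2 + a)^n ≠ 0) (ne_of_gt hfz), Real.log_pow] at h
  have hm' : m ≤ Real.log (‖f z‖) := hm z hzA
  have hM' : Real.log (‖f z‖) ≤ M := hM z hzA
  -- log |w|
  have hlogw : Real.log (‖w‖)
      = Real.log (‖z‖) - n * Real.log 2 := by
    have h := congrArg Real.log hzabs
    rw [Real.log_mul (by positivity) (ne_of_gt hwpos), Real.log_pow] at h
    linarith
  have hlz1 : Real.log r - Real.log 2 ≤ Real.log (‖z‖) := by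
    have := Real.log_le_log (by linarith : (0:ℝ) < r/2) hzlo
    rwa [Real.log_div (ne_of_gt hr) two_ne_zero] at this
  have hlz2 : Real.log (‖z‖) ≤ Real.log r :=
    Real.log_le_log (norm_pos_iff.mpr hz0) hzhi.le
  -- elementary log estimates
  have e1 : Real.log (1/2 + a) ≤ 2*a - Real.log 2 := by
    have heq : (1/2 + a : ℝ) = (1+2*a)/2 := by ring
    rw [heq, Real.log_div (by linarith) two_ne_zero]
    have h := Real.log_le_sub_one_of_pos (x := 1+2*a) (by linarith)
    linarith
  have e2 : -(4*a) - Real.log 2 ≤ Real.log (1/2 - a) := by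
    have heq : (1/2 - a : ℝ) = (1-2*a)/2 := by ring
    rw [heq, Real.log_div (by linarith) two_ne_zero]
    have hpos : (0:ℝ) < 1 - 2*a := by linarith
    have h := Real.log_le_sub_one_of_pos (x := (1-2*a)⁻¹) (by positivity)
    rw [Real.log_inv] at h
    have hinv : (1-2*a)⁻¹ ≤ 1 + 4*a := by
      rw [inv_eq_one_div, div_le_iff₀ hpos]
      have hexp : (1+4*a)*(1-2*a) = 1 + 2*a*(1-4*a) := by ring
      have hnn : (0:ℝ) ≤ a*(1-4*a) := mul_nonneg ha.le (by linarith)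
      linarith
    linarith
  -- multiply by n
  have p1 : (n:ℝ) * Real.log (1/2 + a) ≤ (n:ℝ) * (2*a - Real.log 2) :=
    mul_le_mul_of_nonneg_left e1 (Nat.cast_nonneg n)
  have p2 : (n:ℝ) * (-(4*a) - Real.log 2) ≤ (n:ℝ) * Real.log (1/2 - a) :=
    mul_le_mul_of_nonneg_left e2 (Nat.cast_nonneg n)
  have p1' : (n:ℝ) * (2*a) ≤ (n:ℝ) * (ε * Real.log 2) / 4 := by
    have := mul_le_mul_of_nonneg_left
      (show 2*a ≤ ε * Real.log 2 / 4 by linarith) (Nat.cast_nonneg n : (0:ℝ) ≤ n)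
    linarith
  have p2' : (n:ℝ) * (4*a) ≤ (n:ℝ) * (ε * Real.log 2) / 2 := by
    have := mul_le_mul_of_nonneg_left
      (show 4*a ≤ ε * Real.log 2 / 2 by linarith) (Nat.cast_nonneg n : (0:ℝ) ≤ n)
    linarith
  have p3 : 2 * C < (n:ℝ) * (ε * Real.log 2) := by
    have hNn' : (N:ℝ) < (n:ℝ) := by exact_mod_cast hNn
    have h1 : 2 * C / (ε * Real.log 2) < (n:ℝ) := lt_trans hN hNn'
    have h2 : (0:ℝ) < ε * Real.log 2 := by positivity
    rw [div_lt_iff₀ h2] at h1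
    linarith [h1]
  set Lf := Real.log (‖f w‖) with hLf_def
  set Lw := Real.log (‖w‖) with hLw_def
  have hnlog2 : (0:ℝ) ≤ (n:ℝ) * Real.log 2 := by positivity
  have hLw_ub : (n:ℝ) * Real.log 2 ≤ -Lw := by
    rw [hlogw]
    linarith only [hlz2, hlogr_neg]
  have hLw_neg : Lw < 0 := by
    rw [hlogw]
    linarith only [hlz2, hlogr_neg, hnlog2]
  have habsM : M ≤ |M| := le_abs_self M
  have habsM' : (0:ℝ) ≤ |M| := abs_nonneg M
  have habsm : -m ≤ |m| := neg_le_abs m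
  have habsm' : (0:ℝ) ≤ |m| := abs_nonneg m
  have habsr : -Real.log r ≤ |Real.log r| := neg_le_abs _
  have habsr' : Real.log r ≤ |Real.log r| := le_abs_self _
  have habsr'' : (0:ℝ) ≤ |Real.log r| := abs_nonneg _
  -- the two sides
  have key1 : Lf - Lw < ε * ((n:ℝ) * Real.log 2) := by
    have hub2 : Lf ≤ (n:ℝ) * (2*a - Real.log 2) + M := by
      linarith only [hLfub, p1, hM']
    rw [hlogw]
    linarith only [hub2, p1', p3, hlz1, hC_def, habsM, habsM', habsr, habsr'', habsm', hlog2le]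
  have key2 : -(Lf - Lw) < ε * ((n:ℝ) * Real.log 2) := by
    have hlb2 : (n:ℝ) * (-(4*a) - Real.log 2) + m ≤ Lf := by
      linarith only [hLflb, p2, hm']
    rw [hlogw]
    linarith only [hlb2, p2', p3, hlz2, hC_def, habsm, habsm', habsr', habsr'', habsM', hlog2le]
  have hfinal : |Lf - Lw| < ε * (-Lw) := by
    have hmono : ε * ((n:ℝ) * Real.log 2) ≤ ε * (-Lw) :=
      mul_le_mul_of_nonneg_left hLw_ub hε.le
    rw [abs_lt]
    constructor
    · linarith only [key2, hmono]
    · linarith only [key1, hmono]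
  show dist (Lf / Lw) 1 < ε
  rw [Real.dist_eq]
  have hLwne : Lw ≠ 0 := ne_of_lt hLw_neg
  have heq : Lf / Lw - 1 = (Lf - Lw) / Lw := by
    field_simp
  rw [heq, abs_div, abs_of_neg hLw_neg]
  rw [div_lt_iff₀ (by linarith only [hLw_neg])]
  linarith only [hfinal]
end
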